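/- Let u(s) = u₀ + (2/a)·√(a·s - 1) for s > 1/a, where a > 0. Then u solves the ordinary differential equation 2s·u''(s) + u'(s)·(1 + u'(s)²) = 0 for all s > 1/a. -/

import Mathlib

/-- u(s) = u₀ + (2/a)√(as - 1), a > 0, solves 2s·u'' + u'(1 + (u')²) = 0 for
s > 1/a (the rotationally invariant H-minimal surface equation in ℍ¹). -/
theorem stmt_6 (a u₀ : ℝ) (ha : 0 < a) (u : ℝ → ℝ)
    (hu : u = fun s => u₀ + 2 / a * Real.sqrt (a * s - 1)) :
    ∀ s : ℝ, 1 / a < s →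
      2 * s * deriv (deriv u) s + deriv u s * (1 + (deriv u s) ^ 2) = 0 := by
  have hxpos : ∀ t : ℝ, 1 / a < t → 0 < a * t - 1 := by
    intro t ht
    have h1 : 1 < t * a := (div_lt_iff₀ ha).mp ht
    nlinarith
  have hsqrt : ∀ t : ℝ, 1 / a < t →
      HasDerivAt (fun t => Real.sqrt (a * t - 1)) (a / (2 * Real.sqrt (a * t - 1))) t := by
    intro t ht
    have h1 : HasDerivAt (fun t : ℝ => a * t - 1) a t := by
      simpa using ((hasDerivAt_id t).const_mul a).sub_const 1
    have h2 := (Real.hasDerivAt_sqrt (ne_of_gt (hxpos t ht))).comp t h1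
    have heq : (1 / (2 * Real.sqrt (a * t - 1)) * a) = a / (2 * Real.sqrt (a * t - 1)) := by
      ring
    rw [← heq]
    exact h2
  have key : ∀ t : ℝ, 1 / a < t → HasDerivAt u (Real.sqrt (a * t - 1))⁻¹ t := by
    intro t ht
    have h3 : HasDerivAt u (2 / a * (a / (2 * Real.sqrt (a * t - 1)))) t := by
      rw [hu]; exact ((hsqrt t ht).const_mul (2 / a)).const_add u₀
    convert h3 using 1
    have hs0 : Real.sqrt (a * t - 1) ≠ 0 := ne_of_gt (Real.sqrt_pos.mpr (hxpos t ht))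
    field_simp
  intro s hs
  set v : ℝ → ℝ := fun t => (Real.sqrt (a * t - 1))⁻¹ with hv
  have hev : deriv u =ᶠ[nhds s] v := by
    have hopen : IsOpen {t : ℝ | 1 / a < t} := isOpen_lt continuous_const continuous_id
    filter_upwards [hopen.mem_nhds hs] with t ht
    exact (key t ht).deriv
  have hx : 0 < a * s - 1 := hxpos s hs
  have hs0 : Real.sqrt (a * s - 1) ≠ 0 := ne_of_gt (Real.sqrt_pos.mpr hx)
  have hd1 : deriv u s = (Real.sqrt (a * s - 1))⁻¹ := (key s hs).deriv
  have hv' : HasDerivAt v (-(a / (2 * Real.sqrt (a * s - 1))) / (Real.sqrt (a * s - 1)) ^ 2) s :=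
    (hsqrt s hs).inv hs0
  have hd2 : deriv (deriv u) s
      = -(a / (2 * Real.sqrt (a * s - 1))) / (Real.sqrt (a * s - 1)) ^ 2 := by
    rw [hev.deriv_eq]; exact hv'.deriv
  rw [hd1, hd2]
  have hsq : (Real.sqrt (a * s - 1)) ^ 2 = a * s - 1 := Real.sq_sqrt (le_of_lt hx)
  field_simp
  rw [mul_comm s a, hsq, mul_one_add, mul_one_div_cancel hx.ne']; ring
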